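/- Fix a real number d̄ > 0 and an integer q with 2 ≤ q ≤ d̄. Let K be a finite set of routes, where each route k ∈ K has a duration t_k ≥ 0 and a deadline d̄_k, let P be a finite set of pickers, and let ρ : K × P → {0,1} satisfy, for every picker p ∈ P, Σ_{k ∈ K(d̄)} t_k ρ_{kp} ≤ d̄, where K(d̄) = {k ∈ K : d̄_k ≤ d̄}. For each integer i with 1 ≤ i ≤ q−1, define K(d̄,i,q) = {k ∈ K(d̄) : i·d̄/q < t_k ≤ (i+1)·d̄/q}. Then the Fekete and Schepers cut holds: Σ_{i=1}^{q−1} Σ_{k ∈ K(d̄,i,q)} i · (Σ_{p∈P} ρ_{kp}) ≤ (q−1) · |P|. -/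

import Mathlib

/-- The Fekete and Schepers cut is valid for any assignment satisfying the per-picker
deadline constraints. -/
theorem fekete_schepers_cut {κ π : Type*} (K : Finset κ) (P : Finset π)
    (t d : κ → ℝ) (ht : ∀ k ∈ K, 0 ≤ t k)
    (dbar : ℝ) (hdbar : 0 < dbar) (q : ℕ) (hq1 : 2 ≤ q) (hq2 : (q : ℝ) ≤ dbar)
    (ρ : κ → π → ℝ) (hbin : ∀ k ∈ K, ∀ p ∈ P, ρ k p = 0 ∨ ρ k p = 1)
    (hdl : ∀ p ∈ P, ∑ k ∈ K.filter (fun k => d k ≤ dbar), t k * ρ k p ≤ dbar) :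
    ∑ i ∈ Finset.Icc 1 (q - 1),
      ∑ k ∈ K.filter (fun k => d k ≤ dbar ∧
          (i : ℝ) * dbar / q < t k ∧ t k ≤ ((i : ℝ) + 1) * dbar / q),
        (i : ℝ) * (∑ p ∈ P, ρ k p)
      ≤ ((q : ℝ) - 1) * P.card := by
  classical
  set C : ℕ → Finset κ := fun i => K.filter (fun k => d k ≤ dbar ∧
      (i : ℝ) * dbar / q < t k ∧ t k ≤ ((i : ℝ) + 1) * dbar / q) with hC
  have hq0 : (0:ℝ) < q := by
    have : (2:ℝ) ≤ q := by exact_mod_cast hq1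
    linarith
  have hCK : ∀ i, ∀ k ∈ C i, k ∈ K := fun i k hk => (Finset.mem_filter.mp hk).1
  -- key per-picker bound
  have key : ∀ p ∈ P,
      ∑ i ∈ Finset.Icc 1 (q - 1), ∑ k ∈ C i, (i : ℝ) * ρ k p ≤ (q : ℝ) - 1 := by
    intro p hp
    have hρnn : ∀ k ∈ K, 0 ≤ ρ k p := by
      intro k hk
      rcases hbin k hk p hp with h | h <;> simp [h]
    -- the sum is a natural number
    obtain ⟨n, hn⟩ : ∃ n : ℕ,
        (∑ i ∈ Finset.Icc 1 (q - 1), ∑ k ∈ C i, (i : ℝ) * ρ k p)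
          = (n : ℝ) := by
      refine ⟨∑ i ∈ Finset.Icc 1 (q - 1), ∑ k ∈ C i,
        i * (if ρ k p = 1 then 1 else 0), ?_⟩
      push_cast
      refine Finset.sum_congr rfl fun i hi => Finset.sum_congr rfl fun k hk => ?_
      rcases hbin k (hCK i k hk) p hp with h | h <;> simp [h]
    -- the sum is strictly less than q
    have hlt : (∑ i ∈ Finset.Icc 1 (q - 1), ∑ k ∈ C i, (i : ℝ) * ρ k p) < q := by
      by_cases hz : ∀ i ∈ Finset.Icc 1 (q - 1), ∀ k ∈ C i, ρ k p = 0
      · have : (∑ i ∈ Finset.Icc 1 (q - 1), ∑ k ∈ C i, (i : ℝ) * ρ k p) = 0 := by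
          refine Finset.sum_eq_zero fun i hi => Finset.sum_eq_zero fun k hk => ?_
          rw [hz i hi k hk, mul_zero]
        rw [this]; exact hq0
      · push_neg at hz
        obtain ⟨i₀, hi₀, k₀, hk₀, hρ0⟩ := hz
        have hterm : ∀ i ∈ Finset.Icc 1 (q-1), ∀ k ∈ C i,
            (i : ℝ) * ρ k p ≤ (q / dbar) * (t k * ρ k p) := by
          intro i hi k hk
          rcases hbin k (hCK i k hk) p hp with h | h
          · simp [h]
          · have h1 : (i : ℝ) * dbar / q < t k := (Finset.mem_filter.mp hk).2.2.1
            have : (i : ℝ) < q / dbar * t k := by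
              rw [div_lt_iff₀ hq0] at h1
              rw [div_mul_eq_mul_div, lt_div_iff₀ hdbar]
              linarith
            simp only [h, mul_one]
            linarith
        have hstrict : (i₀ : ℝ) * ρ k₀ p < (q / dbar) * (t k₀ * ρ k₀ p) := by
          have h := (hbin k₀ (hCK i₀ k₀ hk₀) p hp).resolve_left hρ0
          have h1 : (i₀ : ℝ) * dbar / q < t k₀ := (Finset.mem_filter.mp hk₀).2.2.1
          rw [div_lt_iff₀ hq0] at h1
          rw [h, mul_one, mul_one]
          rw [div_mul_eq_mul_div, lt_div_iff₀ hdbar]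
          linarith
        have step1 : (∑ i ∈ Finset.Icc 1 (q - 1), ∑ k ∈ C i, (i : ℝ) * ρ k p)
            < ∑ i ∈ Finset.Icc 1 (q - 1), ∑ k ∈ C i, (q / dbar) * (t k * ρ k p) := by
          refine Finset.sum_lt_sum
            (fun i hi => Finset.sum_le_sum fun k hk => hterm i hi k hk)
            ⟨i₀, hi₀, Finset.sum_lt_sum (fun k hk => hterm i₀ hi₀ k hk)
              ⟨k₀, hk₀, hstrict⟩⟩
        -- disjointness of classes
        have haux : ∀ i j : ℕ, i < j → ∀ k, k ∈ C i → k ∈ C j → False := by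
          intro i j hij k hki hkj
          have h1 : t k ≤ ((i : ℝ) + 1) * dbar / q := (Finset.mem_filter.mp hki).2.2.2
          have h2 : (j : ℝ) * dbar / q < t k := (Finset.mem_filter.mp hkj).2.2.1
          have hij' : (i : ℝ) + 1 ≤ j := by exact_mod_cast hij
          have hpos : 0 < dbar / q := div_pos hdbar hq0
          have : ((i : ℝ) + 1) * (dbar / q) ≤ (j : ℝ) * (dbar / q) :=
            mul_le_mul_of_nonneg_right hij' hpos.le
          rw [mul_div_assoc] at h1 h2
          linarith
        have hdisj : ((Finset.Icc 1 (q-1) : Finset ℕ) : Set ℕ).PairwiseDisjoint C := by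
          intro i hi j hj hij
          refine Finset.disjoint_left.mpr fun k hki hkj => ?_
          rcases lt_or_gt_of_ne hij with h | h
          · exact haux i j h k hki hkj
          · exact haux j i h k hkj hki
        have hbu : ∑ i ∈ Finset.Icc 1 (q - 1), ∑ k ∈ C i, (q / dbar) * (t k * ρ k p)
            = ∑ k ∈ (Finset.Icc 1 (q-1)).biUnion C, (q / dbar) * (t k * ρ k p) :=
          (Finset.sum_biUnion hdisj).symm
        have hsub : (Finset.Icc 1 (q-1)).biUnion C ⊆ K.filter (fun k => d k ≤ dbar) := by
          intro k hk
          obtain ⟨i, _, hki⟩ := Finset.mem_biUnion.mp hk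
          exact Finset.mem_filter.mpr ⟨hCK i k hki, (Finset.mem_filter.mp hki).2.1⟩
        have step2 : ∑ k ∈ (Finset.Icc 1 (q-1)).biUnion C, (q / dbar) * (t k * ρ k p)
            ≤ ∑ k ∈ K.filter (fun k => d k ≤ dbar), (q / dbar) * (t k * ρ k p) := by
          refine Finset.sum_le_sum_of_subset_of_nonneg hsub fun k hk _ => ?_
          have hkK : k ∈ K := (Finset.mem_filter.mp hk).1
          have := ht k hkK
          have := hρnn k hkK
          positivity
        have step3 : ∑ k ∈ K.filter (fun k => d k ≤ dbar), (q / dbar) * (t k * ρ k p)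
            ≤ q := by
          rw [← Finset.mul_sum]
          calc q / dbar * ∑ k ∈ K.filter (fun k => d k ≤ dbar), t k * ρ k p
              ≤ q / dbar * dbar :=
                mul_le_mul_of_nonneg_left (hdl p hp) (by positivity)
            _ = q := div_mul_cancel₀ _ hdbar.ne'
        calc _ < _ := step1
          _ = _ := hbu
          _ ≤ _ := step2
          _ ≤ _ := step3
    rw [hn] at hlt ⊢
    have hnq : n < q := by exact_mod_cast hlt
    have : (n : ℝ) + 1 ≤ q := by exact_mod_cast hnq
    linarith
  -- assemble
  have hswap : ∑ i ∈ Finset.Icc 1 (q - 1), ∑ k ∈ C i, (i : ℝ) * (∑ p ∈ P, ρ k p)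
      = ∑ p ∈ P, ∑ i ∈ Finset.Icc 1 (q - 1), ∑ k ∈ C i, (i : ℝ) * ρ k p := by
    simp_rw [Finset.mul_sum]
    rw [Finset.sum_comm]
    congr 1
    ext p
    exact Finset.sum_comm
  calc ∑ i ∈ Finset.Icc 1 (q - 1), ∑ k ∈ C i, (i : ℝ) * (∑ p ∈ P, ρ k p)
      = ∑ p ∈ P, ∑ i ∈ Finset.Icc 1 (q - 1), ∑ k ∈ C i, (i : ℝ) * ρ k p := hswap
    _ ≤ ∑ p ∈ P, ((q : ℝ) - 1) := Finset.sum_le_sum key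
    _ = ((q : ℝ) - 1) * P.card := by rw [Finset.sum_const, nsmul_eq_mul, mul_comm]
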